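/- Let α be irrational, N ≥ 2, and write first = first(N), last = last(N). For every n with N - first ≤ n < last, there does not exist k with 0 ≤ k < N such that {n·α} < {k·α} < {(n + first - last)·α}. -/

import Mathlib

theorem third_gap (α : ℝ) (hα : Irrational α) (N : ℕ) (hN : 2 ≤ N)
    (f l : ℕ) (hf0 : 0 < f) (hfN : f < N)
    (hf : ∀ m : ℕ, 0 < m → m < N → Int.fract (f * α) ≤ Int.fract (m * α))
    (hl0 : 0 < l) (hlN : l < N)
    (hl : ∀ m : ℕ, 0 < m → m < N → Int.fract (m * α) ≤ Int.fract (l * α)) :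
    ∀ n : ℕ, N - f ≤ n → n < l →
      ¬∃ k : ℕ, k < N ∧
        Int.fract (n * α) < Int.fract (k * α) ∧
        Int.fract (k * α) < Int.fract ((n + f - l : ℕ) * α) := by
  intro n hn1 hn2
  rintro ⟨k, hkN, hk1, hk2⟩
  have hNnf : N ≤ n + f := by omega
  have hln : l ≤ n + f := by omega
  -- fractional parts of nonzero multiples of α are nonzero
  have hfr : ∀ w : ℕ, 0 < w → Int.fract ((w : ℝ) * α) ≠ 0 := by
    intro w hw h0
    have hirr : Irrational ((w : ℝ) * α) := hα.natCast_mul (by omega)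
    have h1 : ((w : ℝ) * α) = (⌊(w : ℝ) * α⌋ : ℤ) := by
      have := Int.self_sub_floor ((w : ℝ) * α)
      rw [h0] at this
      linarith
    exact hirr.ne_int _ h1
  -- abbreviations
  have Fn0 := Int.fract_nonneg ((n : ℝ) * α)
  have Fn1 := Int.fract_lt_one ((n : ℝ) * α)
  have Ff0 := Int.fract_nonneg ((f : ℝ) * α)
  have Ff1 := Int.fract_lt_one ((f : ℝ) * α)
  have Fl0 := Int.fract_nonneg ((l : ℝ) * α)
  have Fl1 := Int.fract_lt_one ((l : ℝ) * α)
  have Fk0 := Int.fract_nonneg ((k : ℝ) * α)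
  have Fk1 := Int.fract_lt_one ((k : ℝ) * α)
  have Fm0 := Int.fract_nonneg (((n + f - l : ℕ) : ℝ) * α)
  have Fm1 := Int.fract_lt_one (((n + f - l : ℕ) : ℝ) * α)
  -- cast identity for m = n + f - l
  have hcast_m : ((n + f - l : ℕ) : ℝ) * α = (n : ℝ) * α + (f : ℝ) * α - (l : ℝ) * α := by
    rw [Nat.cast_sub hln]
    push_cast
    ring
  -- key bound: Fm - Fn ≤ Ff + 1 - Fl
  have hbound : Int.fract (((n + f - l : ℕ) : ℝ) * α) + Int.fract ((l : ℝ) * α)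
      - Int.fract ((n : ℝ) * α) - Int.fract ((f : ℝ) * α) ≤ 1 := by
    set z : ℤ := ⌊(n : ℝ) * α⌋ + ⌊(f : ℝ) * α⌋ - ⌊(l : ℝ) * α⌋ - ⌊((n + f - l : ℕ) : ℝ) * α⌋
      with hz
    have hzr : (z : ℝ) = Int.fract (((n + f - l : ℕ) : ℝ) * α) + Int.fract ((l : ℝ) * α)
        - Int.fract ((n : ℝ) * α) - Int.fract ((f : ℝ) * α) := by
      have e1 := Int.self_sub_floor ((n : ℝ) * α)
      have e2 := Int.self_sub_floor ((f : ℝ) * α)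
      have e3 := Int.self_sub_floor ((l : ℝ) * α)
      have e4 := Int.self_sub_floor (((n + f - l : ℕ) : ℝ) * α)
      rw [hz]
      push_cast
      linarith [hcast_m]
    have h2 : (z : ℝ) < 2 := by rw [hzr]; linarith
    have h2' : z < 2 := by exact_mod_cast h2
    have h1' : z ≤ 1 := by omega
    have : (z : ℝ) ≤ 1 := by exact_mod_cast h1'
    linarith [hzr ▸ this]
  have he : Int.fract ((k : ℝ) * α) - Int.fract ((n : ℝ) * α)
      < Int.fract ((f : ℝ) * α) + 1 - Int.fract ((l : ℝ) * α) := by linarith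
  by_cases hcase : n + f - N < k
  · -- use w = n + f - k
    set w : ℕ := n + f - k with hw
    have hw0 : 0 < w := by omega
    have hwN : w < N := by omega
    have hkle : k ≤ n + f := by omega
    have hcast_w : ((w : ℕ) : ℝ) * α = (n : ℝ) * α + (f : ℝ) * α - (k : ℝ) * α := by
      rw [hw, Nat.cast_sub hkle]
      push_cast
      ring
    have hkey : Int.fract ((w : ℝ) * α)
        = Int.fract (Int.fract ((n : ℝ) * α) + Int.fract ((f : ℝ) * α)
          - Int.fract ((k : ℝ) * α)) := by
      rw [Int.fract_eq_fract]
      refine ⟨⌊(n : ℝ) * α⌋ + ⌊(f : ℝ) * α⌋ - ⌊(k : ℝ) * α⌋, ?_⟩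
      have e1 := Int.self_sub_floor ((n : ℝ) * α)
      have e2 := Int.self_sub_floor ((f : ℝ) * α)
      have e3 := Int.self_sub_floor ((k : ℝ) * α)
      push_cast
      linarith [hcast_w]
    set s : ℝ := Int.fract ((n : ℝ) * α) + Int.fract ((f : ℝ) * α)
      - Int.fract ((k : ℝ) * α) with hs
    rcases lt_trichotomy 0 s with h | h | h
    · have hs1 : s < 1 := by rw [hs]; linarith
      have : Int.fract s = s := Int.fract_eq_self.2 ⟨le_of_lt h, hs1⟩
      have hWs : Int.fract ((w : ℝ) * α) = s := by rw [hkey, this]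
      have := hf w hw0 hwN
      rw [hWs] at this
      rw [hs] at this
      linarith
    · have : Int.fract ((w : ℝ) * α) = 0 := by
        rw [hkey, ← h, Int.fract_zero]
      exact hfr w hw0 this
    · have hs1 : 0 ≤ s + 1 := by rw [hs]; linarith
      have hs2 : s + 1 < 1 := by linarith
      have : Int.fract s = s + 1 := by
        rw [← Int.fract_add_one s]
        exact Int.fract_eq_self.2 ⟨hs1, hs2⟩
      have hWs : Int.fract ((w : ℝ) * α) = s + 1 := by rw [hkey, this]
      have := hl w hw0 hwN
      rw [hWs, hs] at this
      linarith
  · -- use w = k + l - n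
    set w : ℕ := k + l - n with hw
    have hw0 : 0 < w := by omega
    have hwN : w < N := by omega
    have hnle : n ≤ k + l := by omega
    have hcast_w : ((w : ℕ) : ℝ) * α = (k : ℝ) * α + (l : ℝ) * α - (n : ℝ) * α := by
      rw [hw, Nat.cast_sub hnle]
      push_cast
      ring
    have hkey : Int.fract ((w : ℝ) * α)
        = Int.fract (Int.fract ((k : ℝ) * α) + Int.fract ((l : ℝ) * α)
          - Int.fract ((n : ℝ) * α)) := by
      rw [Int.fract_eq_fract]
      refine ⟨⌊(k : ℝ) * α⌋ + ⌊(l : ℝ) * α⌋ - ⌊(n : ℝ) * α⌋, ?_⟩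
      have e1 := Int.self_sub_floor ((k : ℝ) * α)
      have e2 := Int.self_sub_floor ((l : ℝ) * α)
      have e3 := Int.self_sub_floor ((n : ℝ) * α)
      push_cast
      linarith [hcast_w]
    set s : ℝ := Int.fract ((k : ℝ) * α) + Int.fract ((l : ℝ) * α)
      - Int.fract ((n : ℝ) * α) with hs
    rcases lt_trichotomy s 1 with h | h | h
    · have hs0 : 0 ≤ s := by rw [hs]; linarith
      have : Int.fract s = s := Int.fract_eq_self.2 ⟨hs0, h⟩
      have hWs : Int.fract ((w : ℝ) * α) = s := by rw [hkey, this]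
      have := hl w hw0 hwN
      rw [hWs, hs] at this
      linarith
    · have : Int.fract ((w : ℝ) * α) = 0 := by
        rw [hkey, h, Int.fract_one]
      exact hfr w hw0 this
    · have hs1 : 0 ≤ s - 1 := by linarith
      have hs2 : s - 1 < 1 := by rw [hs]; linarith
      have : Int.fract s = s - 1 := by
        have h5 := Int.fract_add_one (s - 1)
        have h6 : s - 1 + 1 = s := by ring
        rw [h6] at h5
        rw [h5]
        exact Int.fract_eq_self.2 ⟨hs1, hs2⟩
      have hWs : Int.fract ((w : ℝ) * α) = s - 1 := by rw [hkey, this]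
      have := hf w hw0 hwN
      rw [hWs, hs] at this
      linarith
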